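/- Let E be a real normed vector space and E' a real Banach space, ε > 0 and p < 0. Suppose f : E → E' satisfies ‖f(x+y) − f(x) − f(y)‖ ≤ ε(‖x‖^p + ‖y‖^p) for all nonzero x, y ∈ E. Then there exists a unique additive mapping T : E → E' such that ‖f(x) − T(x)‖ ≤ (2ε/(2 − 2^p))‖x‖^p for all nonzero x ∈ E. -/

import Mathlib

open Filter Topology

/-- Rassias' stability theorem for negative exponent `p < 0`: if
`‖f(x+y) − f(x) − f(y)‖ ≤ ε(‖x‖^p + ‖y‖^p)` holds for all nonzero `x, y`, then there
exists a unique additive `T` with `‖f(x) − T(x)‖ ≤ 2ε/(2 − 2^p)·‖x‖^p` for all `x ≠ 0`. -/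
theorem rassias_stability_neg_exponent
    {E E' : Type*} [NormedAddCommGroup E] [NormedSpace ℝ E]
    [NormedAddCommGroup E'] [NormedSpace ℝ E'] [CompleteSpace E']
    (ε p : ℝ) (hε : 0 < ε) (hp : p < 0)
    (f : E → E')
    (hf : ∀ x y : E, x ≠ 0 → y ≠ 0 → ‖f (x + y) - f x - f y‖ ≤ ε * (‖x‖ ^ p + ‖y‖ ^ p)) :
    ∃! T : E → E',
      (∀ x y : E, T (x + y) = T x + T y) ∧
      (∀ x : E, x ≠ 0 → ‖f x - T x‖ ≤ 2 * ε / (2 - 2 ^ p) * ‖x‖ ^ p) := by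
  have h2p_pos : (0:ℝ) < 2 ^ p := Real.rpow_pos_of_pos two_pos p
  have h2p_lt_one : (2:ℝ) ^ p < 1 := Real.rpow_lt_one_of_one_lt_of_neg one_lt_two hp
  set r : ℝ := 2 ^ p / 2 with hr_def
  have hr_pos : 0 < r := by positivity
  have hr_lt : r < 1 := by rw [hr_def]; linarith
  have hpow_pos : ∀ n : ℕ, (0:ℝ) < 2 ^ n := fun n => by positivity
  -- the rpow/pow identity
  have hrpow : ∀ n : ℕ, ((2:ℝ) ^ n) ^ p = ((2:ℝ) ^ p) ^ n := by
    intro n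
    rw [← Real.rpow_natCast 2 n, ← Real.rpow_natCast ((2:ℝ) ^ p) n,
      ← Real.rpow_mul (by norm_num), ← Real.rpow_mul (by norm_num), mul_comm]
  -- the approximating sequence
  set g : ℕ → E → E' := fun n x => ((2:ℝ) ^ n)⁻¹ • f ((2:ℝ) ^ n • x) with hg
  -- norm of scaled points
  have hnorm_smul : ∀ (n : ℕ) (x : E), x ≠ 0 →
      ‖(2:ℝ) ^ n • x‖ ^ p = ((2:ℝ) ^ p) ^ n * ‖x‖ ^ p := by
    intro n x hx
    rw [norm_smul, Real.norm_of_nonneg (hpow_pos n).le,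
      Real.mul_rpow (hpow_pos n).le (norm_nonneg x), hrpow]
  -- key geometric step estimate
  have key : ∀ (x : E), x ≠ 0 → ∀ n : ℕ,
      ‖g n x - g (n + 1) x‖ ≤ ε * ‖x‖ ^ p * r ^ n := by
    intro x hx n
    set z : E := (2:ℝ) ^ n • x with hz_def
    have hz0 : z ≠ 0 := smul_ne_zero (by positivity) hx
    have hstep : ‖f ((2:ℝ) • z) - (2:ℝ) • f z‖ ≤ 2 * ε * ‖z‖ ^ p := by
      have := hf z z hz0 hz0
      have h1 : z + z = (2:ℝ) • z := by rw [two_smul]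
      have h2 : f z + f z = (2:ℝ) • f z := by rw [two_smul]
      calc ‖f ((2:ℝ) • z) - (2:ℝ) • f z‖ = ‖f (z + z) - f z - f z‖ := by
            rw [h1, sub_sub, h2]
        _ ≤ ε * (‖z‖ ^ p + ‖z‖ ^ p) := this
        _ = 2 * ε * ‖z‖ ^ p := by ring
    have hEq : g n x - g (n + 1) x
        = ((2:ℝ) ^ (n + 1))⁻¹ • ((2:ℝ) • f z - f ((2:ℝ) • z)) := by
      have h1 : (2:ℝ) ^ (n + 1) • x = (2:ℝ) • z := by
        rw [hz_def, smul_smul]; ring_nf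
      have h2 : ((2:ℝ) ^ n)⁻¹ = ((2:ℝ) ^ (n + 1))⁻¹ * 2 := by
        rw [pow_succ]; field_simp
      simp only [hg, h1, ← hz_def, smul_sub, h2, mul_smul]
    rw [hEq, norm_smul, Real.norm_of_nonneg (by positivity : (0:ℝ) ≤ ((2:ℝ)^(n+1))⁻¹)]
    have h3 : ‖(2:ℝ) • f z - f ((2:ℝ) • z)‖ ≤ 2 * ε * ‖z‖ ^ p := by
      rw [← norm_neg]; simpa [neg_sub] using hstep
    calc ((2:ℝ) ^ (n + 1))⁻¹ * ‖(2:ℝ) • f z - f ((2:ℝ) • z)‖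
        ≤ ((2:ℝ) ^ (n + 1))⁻¹ * (2 * ε * ‖z‖ ^ p) := by
          apply mul_le_mul_of_nonneg_left h3 (by positivity)
      _ = ε * ‖x‖ ^ p * r ^ n := by
          rw [hz_def, hnorm_smul n x hx, hr_def, div_pow, pow_succ]
          field_simp
  -- convergence of the sequence for every x
  have hzero_tendsto : Tendsto (fun n => g n (0 : E)) atTop (𝓝 0) := by
    have h1 : ∀ n : ℕ, g n (0 : E) = ((2:ℝ)⁻¹) ^ n • f 0 := by
      intro n; simp [hg, smul_zero, inv_pow]
    have h2 : Tendsto (fun n : ℕ => ((2:ℝ)⁻¹) ^ n • f 0) atTop (𝓝 ((0:ℝ) • f 0)) :=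
      (tendsto_pow_atTop_nhds_zero_of_lt_one (by norm_num) (by norm_num)).smul_const (f 0)
    simpa [h1, zero_smul] using h2
  have hconv : ∀ x : E, ∃ L : E', Tendsto (fun n => g n x) atTop (𝓝 L) := by
    intro x
    by_cases hx : x = 0
    · exact ⟨0, hx ▸ hzero_tendsto⟩
    · have hcau : CauchySeq (fun n => g n x) := by
        apply cauchySeq_of_le_geometric r (ε * ‖x‖ ^ p) hr_lt
        intro n; rw [dist_eq_norm]; exact key x hx n
      exact cauchySeq_tendsto_of_complete hcau
  choose T hT using hconv
  have hT0 : T 0 = 0 := tendsto_nhds_unique (hT 0) hzero_tendsto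
  have hne : (2:ℝ) - 2 ^ p ≠ 0 := by linarith
  -- the approximation bound
  have hbound : ∀ x : E, x ≠ 0 → ‖f x - T x‖ ≤ 2 * ε / (2 - 2 ^ p) * ‖x‖ ^ p := by
    intro x hx
    have h1 : dist (g 0 x) (T x) ≤ (ε * ‖x‖ ^ p) / (1 - r) := by
      exact dist_le_of_le_geometric_of_tendsto₀ r (ε * ‖x‖ ^ p) hr_lt
        (fun n => by rw [dist_eq_norm]; exact key x hx n) (hT x)
    have h2 : g 0 x = f x := by simp [hg]
    rw [h2, dist_eq_norm] at h1
    have h3 : (ε * ‖x‖ ^ p) / (1 - r) = 2 * ε / (2 - 2 ^ p) * ‖x‖ ^ p := by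
      rw [hr_def]; field_simp
    linarith [h1, h3 ▸ h1]
  -- additivity
  have hadd3 : ∀ x y : E, x ≠ 0 → y ≠ 0 → T (x + y) = T x + T y := by
    intro x y hx hy
    have hsq : Tendsto (fun n => g n (x + y) - g n x - g n y) atTop (𝓝 0) := by
      apply squeeze_zero_norm (a := fun n => ε * (‖x‖ ^ p + ‖y‖ ^ p) * r ^ n)
      · intro n
        have hxn : (2:ℝ) ^ n • x ≠ 0 := smul_ne_zero (by positivity) hx
        have hyn : (2:ℝ) ^ n • y ≠ 0 := smul_ne_zero (by positivity) hy
        have h1 := hf ((2:ℝ) ^ n • x) ((2:ℝ) ^ n • y) hxn hyn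
        have h2 : g n (x + y) - g n x - g n y
            = ((2:ℝ) ^ n)⁻¹ • (f ((2:ℝ) ^ n • x + (2:ℝ) ^ n • y)
              - f ((2:ℝ) ^ n • x) - f ((2:ℝ) ^ n • y)) := by
          simp [hg, smul_add, smul_sub]
        rw [h2, norm_smul, Real.norm_of_nonneg (by positivity : (0:ℝ) ≤ ((2:ℝ)^n)⁻¹)]
        calc ((2:ℝ) ^ n)⁻¹ * ‖f ((2:ℝ) ^ n • x + (2:ℝ) ^ n • y)
              - f ((2:ℝ) ^ n • x) - f ((2:ℝ) ^ n • y)‖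
            ≤ ((2:ℝ) ^ n)⁻¹ * (ε * (‖(2:ℝ) ^ n • x‖ ^ p + ‖(2:ℝ) ^ n • y‖ ^ p)) :=
              mul_le_mul_of_nonneg_left h1 (by positivity)
          _ = ε * (‖x‖ ^ p + ‖y‖ ^ p) * r ^ n := by
              rw [hnorm_smul n x hx, hnorm_smul n y hy, hr_def, div_pow]
              field_simp
      · have h0 : Tendsto (fun n : ℕ => ε * (‖x‖ ^ p + ‖y‖ ^ p) * r ^ n) atTop
            (𝓝 (ε * (‖x‖ ^ p + ‖y‖ ^ p) * 0)) :=
          (tendsto_pow_atTop_nhds_zero_of_lt_one hr_pos.le hr_lt).const_mul _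
        simpa using h0
    have h2 : Tendsto (fun n => g n (x + y) - g n x - g n y) atTop
        (𝓝 (T (x + y) - T x - T y)) := ((hT (x + y)).sub (hT x)).sub (hT y)
    have h3 := tendsto_nhds_unique h2 hsq
    have h4 : T (x + y) - T x - T y = 0 := h3
    rw [sub_sub, sub_eq_zero] at h4
    exact h4
  have hadd : ∀ x y : E, T (x + y) = T x + T y := by
    intro x y
    by_cases hx : x = 0
    · simp [hx, hT0]
    by_cases hy : y = 0
    · simp [hy, hT0]
    exact hadd3 x y hx hy
  -- scaling for additive maps
  have hscale : ∀ (S : E → E'), (∀ a b : E, S (a + b) = S a + S b) →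
      ∀ (n : ℕ) (x : E), S ((2:ℝ) ^ n • x) = (2:ℝ) ^ n • S x := by
    intro S hS n x
    let φ : E →+ E' := AddMonoidHom.mk' S hS
    have h1 : (2:ℝ) ^ n • x = (2 ^ n : ℕ) • x := by
      rw [← Nat.cast_smul_eq_nsmul ℝ]; push_cast; ring_nf
    have h2 : S ((2 ^ n : ℕ) • x) = (2 ^ n : ℕ) • S x := φ.map_nsmul _ x
    rw [h1, h2, ← Nat.cast_smul_eq_nsmul ℝ]; push_cast; ring_nf
  refine ⟨T, ⟨hadd, hbound⟩, ?_⟩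
  rintro T' ⟨hT'add, hT'bound⟩
  funext x
  by_cases hx : x = 0
  · have h1 : T' 0 = 0 := by
      have := hT'add 0 0; simpa using this.symm
    rw [hx, h1, hT0]
  · -- uniqueness: both additive and close to f forces equality
    set K : ℝ := 2 * ε / (2 - 2 ^ p) with hK_def
    have hK_pos : 0 < K := by
      rw [hK_def]; apply div_pos (by linarith) (by linarith)
    have hb : ∀ n : ℕ, ‖T' x - T x‖ ≤ 2 * K * ‖x‖ ^ p * r ^ n := by
      intro n
      have hxn : (2:ℝ) ^ n • x ≠ 0 := smul_ne_zero (by positivity) hx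
      have h1 := hbound _ hxn
      have h2 := hT'bound _ hxn
      have h3 : ‖T' ((2:ℝ) ^ n • x) - T ((2:ℝ) ^ n • x)‖ ≤ 2 * K * ‖(2:ℝ) ^ n • x‖ ^ p := by
        calc ‖T' ((2:ℝ) ^ n • x) - T ((2:ℝ) ^ n • x)‖
            = ‖(f ((2:ℝ) ^ n • x) - T ((2:ℝ) ^ n • x))
              - (f ((2:ℝ) ^ n • x) - T' ((2:ℝ) ^ n • x))‖ := by congr 1; abel
          _ ≤ ‖f ((2:ℝ) ^ n • x) - T ((2:ℝ) ^ n • x)‖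
              + ‖f ((2:ℝ) ^ n • x) - T' ((2:ℝ) ^ n • x)‖ := norm_sub_le _ _
          _ ≤ K * ‖(2:ℝ) ^ n • x‖ ^ p + K * ‖(2:ℝ) ^ n • x‖ ^ p := add_le_add h1 h2
          _ = 2 * K * ‖(2:ℝ) ^ n • x‖ ^ p := by ring
      have h4 : T' x - T x = ((2:ℝ) ^ n)⁻¹ • (T' ((2:ℝ) ^ n • x) - T ((2:ℝ) ^ n • x)) := by
        rw [hscale T' hT'add, hscale T hadd, smul_sub, inv_smul_smul₀ (hpow_pos n).ne',
          inv_smul_smul₀ (hpow_pos n).ne']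
      rw [h4, norm_smul, Real.norm_of_nonneg (by positivity : (0:ℝ) ≤ ((2:ℝ)^n)⁻¹)]
      calc ((2:ℝ) ^ n)⁻¹ * ‖T' ((2:ℝ) ^ n • x) - T ((2:ℝ) ^ n • x)‖
          ≤ ((2:ℝ) ^ n)⁻¹ * (2 * K * ‖(2:ℝ) ^ n • x‖ ^ p) :=
            mul_le_mul_of_nonneg_left h3 (by positivity)
        _ = 2 * K * ‖x‖ ^ p * r ^ n := by
            rw [hnorm_smul n x hx, hr_def, div_pow]
            field_simp
    have h0 : Tendsto (fun n : ℕ => 2 * K * ‖x‖ ^ p * r ^ n) atTop (𝓝 0) := by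
      have := (tendsto_pow_atTop_nhds_zero_of_lt_one hr_pos.le hr_lt).const_mul
        (2 * K * ‖x‖ ^ p)
      simpa using this
    have h5 : ‖T' x - T x‖ ≤ 0 := ge_of_tendsto' h0 hb
    have h6 : T' x - T x = 0 := by
      have := norm_nonneg (T' x - T x)
      have : ‖T' x - T x‖ = 0 := le_antisymm h5 this
      exact norm_eq_zero.mp this
    exact sub_eq_zero.mp h6
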